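/- Let E be a real locally convex topological vector space with dual E*, and T : E ⇉ E*. Then T is monotone if and only if for every x* ∈ E* and every two points (x_1,x_1*), (x_2,x_2*) in the graph of T, there exists x̄ on the segment [x_1,x_2] such that ⟨x_1* − x*, x_1 − x̄⟩ ≥ 0 and ⟨x_2* − x*, x_2 − x̄⟩ ≥ 0. -/

import Mathlib

/-- `T` is monotone iff for every `x* ∈ E*` and every two points of the graph of `T`,
the Minty inequality has a solution on the segment joining them. -/
theorem monotone_iff_segment_minty {E : Type*} [AddCommGroup E] [Module ℝ E]
    [TopologicalSpace E] [IsTopologicalAddGroup E] [ContinuousSMul ℝ E]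
    [LocallyConvexSpace ℝ E] [T2Space E]
    (T : E → Set (E →L[ℝ] ℝ)) :
    (∀ x y (x' y' : E →L[ℝ] ℝ), x' ∈ T x → y' ∈ T y → 0 ≤ (y' - x') (y - x)) ↔
    (∀ z : E →L[ℝ] ℝ, ∀ x₁ x₂ (x₁' x₂' : E →L[ℝ] ℝ), x₁' ∈ T x₁ → x₂' ∈ T x₂ →
      ∃ xb ∈ segment ℝ x₁ x₂,
        0 ≤ (x₁' - z) (x₁ - xb) ∧ 0 ≤ (x₂' - z) (x₂ - xb)) := by
  constructor
  · intro h z x₁ x₂ x₁' x₂' h1 h2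
    have hmono := h x₁ x₂ x₁' x₂' h1 h2
    by_cases hb : 0 ≤ (x₂' - z) (x₂ - x₁)
    · exact ⟨x₁, left_mem_segment ℝ x₁ x₂, by simp, hb⟩
    · refine ⟨x₂, right_mem_segment ℝ x₁ x₂, ?_, by simp⟩
      have e1 : (x₂' - x₁') (x₂ - x₁) = (x₂' - z) (x₂ - x₁) - (x₁' - z) (x₂ - x₁) := by
        simp [ContinuousLinearMap.sub_apply]
      have e2 : (x₁' - z) (x₁ - x₂) = -((x₁' - z) (x₂ - x₁)) := by
        rw [← map_neg]; congr 1; abel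
      rw [e2]
      rw [e1] at hmono
      linarith
  · intro h x y x' y' hx hy
    by_contra hlt
    push_neg at hlt
    set u := y - x with hu
    have hu0 : u ≠ 0 := by
      intro h0
      rw [h0] at hlt
      simp at hlt
    obtain ⟨f, hf⟩ := SeparatingDual.exists_eq_one (R := ℝ) hu0
    set c : ℝ := (y' - x') u with hc
    have hcneg : c < 0 := hlt
    set z : E →L[ℝ] ℝ := x' + (c / 2) • f with hz
    obtain ⟨xb, hseg, hA, hB⟩ := h z x y x' y' hx hy
    obtain ⟨a, b, ha, hb, hab, hxb⟩ := hseg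
    have hxxb : x - xb = -b • u := by
      rw [← hxb, hu]
      have : a = 1 - b := by linarith
      rw [this]
      module
    have hyxb : y - xb = a • u := by
      rw [← hxb, hu]
      have : b = 1 - a := by linarith
      rw [this]
      module
    have hxz : x' - z = -((c / 2) • f) := by rw [hz]; abel
    have hyz : y' - z = (y' - x') - (c / 2) • f := by rw [hz]; abel
    have hfa : ((c / 2) • f) (a • u) = a * (c / 2) := by
      rw [ContinuousLinearMap.smul_apply, map_smul, hf, smul_eq_mul, smul_eq_mul]
      ring
    have hfb : ((c / 2) • f) (-b • u) = -(b * (c / 2)) := by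
      rw [ContinuousLinearMap.smul_apply, map_smul, hf, smul_eq_mul, smul_eq_mul]
      ring
    have eA : (x' - z) (x - xb) = (c / 2) * b := by
      rw [hxxb, hxz, ContinuousLinearMap.neg_apply, hfb]
      ring
    have eB : (y' - z) (y - xb) = a * (c / 2) := by
      rw [hyxb, hyz, ContinuousLinearMap.sub_apply, hfa, map_smul, smul_eq_mul, ← hc]
      ring
    rw [eA] at hA
    rw [eB] at hB
    have hc2 : c / 2 < 0 := by linarith
    have hb0 : b ≤ 0 := by
      by_contra hbp
      push_neg at hbp
      exact absurd hA (not_le.2 (mul_neg_of_neg_of_pos hc2 hbp))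
    have ha0 : a ≤ 0 := by
      by_contra hap
      push_neg at hap
      exact absurd hB (not_le.2 (mul_neg_of_pos_of_neg hap hc2))
    linarith
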